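/- Cross-product centers are a √2-approximation for projected k-median: let P be a finite multiset in ℝ^{d₁} × ℝ^{d₂}, let S_v, S_z be finite sets of k centers in the two factors, and suppose ∑_{t} dist(π_v(t), S_v) ≤ β · min over all k-center sets C_v ⊂ ℝ^{d₁} of ∑_t dist(π_v(t), C_v), and similarly for S_z with factor β. Then X = S_v × S_z (a set of k² centers) satisfies ∑_t dist(t, X) ≤ √2 · β · min over all k-center sets C ⊂ ℝ^{d₁+d₂} of ∑_t dist(t, C). -/

import Mathlib

open Metric

noncomputable def pairL2 {d₁ d₂ : ℕ} (a : EuclideanSpace ℝ (Fin d₁))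
    (b : EuclideanSpace ℝ (Fin d₂)) :
    WithLp 2 (EuclideanSpace ℝ (Fin d₁) × EuclideanSpace ℝ (Fin d₂)) :=
  (WithLp.equiv 2 (EuclideanSpace ℝ (Fin d₁) × EuclideanSpace ℝ (Fin d₂))).symm (a, b)

noncomputable def projV {d₁ d₂ : ℕ}
    (t : WithLp 2 (EuclideanSpace ℝ (Fin d₁) × EuclideanSpace ℝ (Fin d₂))) :
    EuclideanSpace ℝ (Fin d₁) :=
  ((WithLp.equiv 2 (EuclideanSpace ℝ (Fin d₁) × EuclideanSpace ℝ (Fin d₂))) t).1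

noncomputable def projZ {d₁ d₂ : ℕ}
    (t : WithLp 2 (EuclideanSpace ℝ (Fin d₁) × EuclideanSpace ℝ (Fin d₂))) :
    EuclideanSpace ℝ (Fin d₂) :=
  ((WithLp.equiv 2 (EuclideanSpace ℝ (Fin d₁) × EuclideanSpace ℝ (Fin d₂))) t).2

section aux
open Metric

lemma sqrt_add_sq_le_add {a b : ℝ} (ha : 0 ≤ a) (hb : 0 ≤ b) :
    Real.sqrt (a ^ 2 + b ^ 2) ≤ a + b := by
  rw [show a + b = Real.sqrt ((a+b)^2) by rw [Real.sqrt_sq (by linarith)]]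
  exact Real.sqrt_le_sqrt (by nlinarith)

lemma add_le_sqrt_two_mul_sqrt {a b : ℝ} (ha : 0 ≤ a) (hb : 0 ≤ b) :
    a + b ≤ Real.sqrt 2 * Real.sqrt (a ^ 2 + b ^ 2) := by
  rw [← Real.sqrt_mul (by norm_num)]
  rw [show a + b = Real.sqrt ((a+b)^2) by rw [Real.sqrt_sq (by linarith)]]
  exact Real.sqrt_le_sqrt (by nlinarith [sq_nonneg (a - b)])

lemma fst_pairL2 {d₁ d₂ : ℕ} (a : EuclideanSpace ℝ (Fin d₁)) (b : EuclideanSpace ℝ (Fin d₂)) :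
    (pairL2 a b).fst = a := rfl

lemma pointwise_upper {d₁ d₂ : ℕ}
    (t : WithLp 2 (EuclideanSpace ℝ (Fin d₁) × EuclideanSpace ℝ (Fin d₂)))
    (Sv : Finset (EuclideanSpace ℝ (Fin d₁))) (Sz : Finset (EuclideanSpace ℝ (Fin d₂)))
    (hSv : Sv.Nonempty) (hSz : Sz.Nonempty) :
    infDist t ((fun p : EuclideanSpace ℝ (Fin d₁) × EuclideanSpace ℝ (Fin d₂) => pairL2 p.1 p.2) ''
        ((↑Sv : Set _) ×ˢ (↑Sz : Set _)))
      ≤ infDist (projV t) (↑Sv : Set _) + infDist (projZ t) (↑Sz : Set _) := by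
  obtain ⟨a, haS, ha⟩ := Sv.finite_toSet.isCompact.exists_infDist_eq_dist
    (by exact_mod_cast hSv) (projV t)
  obtain ⟨b, hbS, hb⟩ := Sz.finite_toSet.isCompact.exists_infDist_eq_dist
    (by exact_mod_cast hSz) (projZ t)
  have hmem : pairL2 a b ∈ (fun p : EuclideanSpace ℝ (Fin d₁) × EuclideanSpace ℝ (Fin d₂) =>
      pairL2 p.1 p.2) '' ((↑Sv : Set _) ×ˢ (↑Sz : Set _)) :=
    ⟨(a, b), ⟨haS, hbS⟩, rfl⟩
  calc infDist t _ ≤ dist t (pairL2 a b) := infDist_le_dist_of_mem hmem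
    _ = Real.sqrt (dist (projV t) a ^ 2 + dist (projZ t) b ^ 2) :=
        WithLp.prod_dist_eq_of_L2 t (pairL2 a b)
    _ ≤ dist (projV t) a + dist (projZ t) b :=
        sqrt_add_sq_le_add dist_nonneg dist_nonneg
    _ = _ := by rw [ha, hb]

lemma pointwise_lower {d₁ d₂ : ℕ} [DecidableEq (EuclideanSpace ℝ (Fin d₁))]
    [DecidableEq (EuclideanSpace ℝ (Fin d₂))]
    (t : WithLp 2 (EuclideanSpace ℝ (Fin d₁) × EuclideanSpace ℝ (Fin d₂)))
    (C : Finset (WithLp 2 (EuclideanSpace ℝ (Fin d₁) × EuclideanSpace ℝ (Fin d₂))))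
    (hC : C.Nonempty) :
    infDist (projV t) (↑(C.image projV) : Set _) + infDist (projZ t) (↑(C.image projZ) : Set _)
      ≤ Real.sqrt 2 * infDist t (↑C : Set _) := by
  obtain ⟨c, hcC, hc⟩ := C.finite_toSet.isCompact.exists_infDist_eq_dist
    (by exact_mod_cast hC) t
  have h1 : infDist (projV t) (↑(C.image projV) : Set _) ≤ dist (projV t) (projV c) :=
    infDist_le_dist_of_mem (by exact_mod_cast Finset.mem_image_of_mem projV hcC)
  have h2 : infDist (projZ t) (↑(C.image projZ) : Set _) ≤ dist (projZ t) (projZ c) :=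
    infDist_le_dist_of_mem (by exact_mod_cast Finset.mem_image_of_mem projZ hcC)
  have hd : dist t c = Real.sqrt (dist (projV t) (projV c) ^ 2 + dist (projZ t) (projZ c) ^ 2) :=
    WithLp.prod_dist_eq_of_L2 t c
  calc _ ≤ dist (projV t) (projV c) + dist (projZ t) (projZ c) := add_le_add h1 h2
    _ ≤ Real.sqrt 2 * Real.sqrt (dist (projV t) (projV c) ^ 2 + dist (projZ t) (projZ c) ^ 2) :=
        add_le_sqrt_two_mul_sqrt dist_nonneg dist_nonneg
    _ = Real.sqrt 2 * infDist t (↑C : Set _) := by rw [hc, hd]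

end aux

/-- Cross-product centers are a `√2·β` approximation for k-median. -/
theorem stmt_9 {d₁ d₂ k : ℕ} (hk : 1 ≤ k) {β : ℝ} (hβ : 1 ≤ β)
    (P : Multiset (WithLp 2 (EuclideanSpace ℝ (Fin d₁) × EuclideanSpace ℝ (Fin d₂))))
    (Sv : Finset (EuclideanSpace ℝ (Fin d₁))) (Sz : Finset (EuclideanSpace ℝ (Fin d₂)))
    (hSv : Sv.card = k) (hSz : Sz.card = k)
    (hv : ∀ Cv : Finset (EuclideanSpace ℝ (Fin d₁)), Cv.card = k →
      (P.map (fun t => infDist (projV t) (↑Sv : Set (EuclideanSpace ℝ (Fin d₁))))).sum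
        ≤ β * (P.map (fun t => infDist (projV t) (↑Cv : Set (EuclideanSpace ℝ (Fin d₁))))).sum)
    (hz : ∀ Cz : Finset (EuclideanSpace ℝ (Fin d₂)), Cz.card = k →
      (P.map (fun t => infDist (projZ t) (↑Sz : Set (EuclideanSpace ℝ (Fin d₂))))).sum
        ≤ β * (P.map (fun t => infDist (projZ t) (↑Cz : Set (EuclideanSpace ℝ (Fin d₂))))).sum) :
    ∀ C : Finset (WithLp 2 (EuclideanSpace ℝ (Fin d₁) × EuclideanSpace ℝ (Fin d₂))),
      C.card = k →
      (P.map (fun t => infDist t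
          ((fun p : EuclideanSpace ℝ (Fin d₁) × EuclideanSpace ℝ (Fin d₂) => pairL2 p.1 p.2) ''
            ((↑Sv : Set _) ×ˢ (↑Sz : Set _))))).sum
        ≤ Real.sqrt 2 * β * (P.map (fun t => infDist t (↑C : Set _))).sum := by
  intro C hC
  classical
  have hCne : C.Nonempty := Finset.card_pos.mp (by rw [hC]; exact hk)
  have hSvne : Sv.Nonempty := Finset.card_pos.mp (by rw [hSv]; exact hk)
  have hSzne : Sz.Nonempty := Finset.card_pos.mp (by rw [hSz]; exact hk)
  have hβ0 : (0:ℝ) ≤ β := le_trans zero_le_one hβ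
  -- extend the projected images of C to cardinality-k center sets
  have himV : (C.image projV).card ≤ k := le_trans Finset.card_image_le (le_of_eq hC)
  have himZ : (C.image projZ).card ≤ k := le_trans Finset.card_image_le (le_of_eq hC)
  obtain ⟨Cv, hCvsub, -, hCvcard⟩ := Finset.exists_subsuperset_card_eq
    (Finset.subset_union_left (s₂ := Sv))
    (Nat.le_add_left _ (k - (C.image projV).card))
    (by
      rw [Nat.sub_add_cancel himV]
      calc k = Sv.card := hSv.symm
        _ ≤ (C.image projV ∪ Sv).card := Finset.card_le_card Finset.subset_union_right)
  obtain ⟨Cz, hCzsub, -, hCzcard⟩ := Finset.exists_subsuperset_card_eq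
    (Finset.subset_union_left (s₂ := Sz))
    (Nat.le_add_left _ (k - (C.image projZ).card))
    (by
      rw [Nat.sub_add_cancel himZ]
      calc k = Sz.card := hSz.symm
        _ ≤ (C.image projZ ∪ Sz).card := Finset.card_le_card Finset.subset_union_right)
  rw [Nat.sub_add_cancel himV] at hCvcard
  rw [Nat.sub_add_cancel himZ] at hCzcard
  have himVne : (C.image projV).Nonempty := hCne.image projV
  have himZne : (C.image projZ).Nonempty := hCne.image projZ
  -- chain of inequalities
  have step1 : (P.map (fun t => infDist t
      ((fun p : EuclideanSpace ℝ (Fin d₁) × EuclideanSpace ℝ (Fin d₂) => pairL2 p.1 p.2) ''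
        ((↑Sv : Set _) ×ˢ (↑Sz : Set _))))).sum
      ≤ (P.map (fun t => infDist (projV t) (↑Sv : Set _))).sum
        + (P.map (fun t => infDist (projZ t) (↑Sz : Set _))).sum := by
    rw [← Multiset.sum_map_add]
    exact Multiset.sum_map_le_sum_map _ _ (fun t _ => pointwise_upper t Sv Sz hSvne hSzne)
  have stepv : (P.map (fun t => infDist (projV t) (↑Cv : Set _))).sum
      ≤ (P.map (fun t => infDist (projV t) (↑(C.image projV) : Set _))).sum :=
    Multiset.sum_map_le_sum_map _ _ (fun t _ =>
      infDist_le_infDist_of_subset (by exact_mod_cast hCvsub) (by exact_mod_cast himVne))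
  have stepz : (P.map (fun t => infDist (projZ t) (↑Cz : Set _))).sum
      ≤ (P.map (fun t => infDist (projZ t) (↑(C.image projZ) : Set _))).sum :=
    Multiset.sum_map_le_sum_map _ _ (fun t _ =>
      infDist_le_infDist_of_subset (by exact_mod_cast hCzsub) (by exact_mod_cast himZne))
  have step3 : (P.map (fun t => infDist (projV t) (↑(C.image projV) : Set _))).sum
      + (P.map (fun t => infDist (projZ t) (↑(C.image projZ) : Set _))).sum
      ≤ Real.sqrt 2 * (P.map (fun t => infDist t (↑C : Set _))).sum := by
    rw [← Multiset.sum_map_add, ← Multiset.sum_map_mul_left]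
    exact Multiset.sum_map_le_sum_map _ _ (fun t _ => pointwise_lower t C hCne)
  calc (P.map (fun t => infDist t
      ((fun p : EuclideanSpace ℝ (Fin d₁) × EuclideanSpace ℝ (Fin d₂) => pairL2 p.1 p.2) ''
        ((↑Sv : Set _) ×ˢ (↑Sz : Set _))))).sum
      ≤ (P.map (fun t => infDist (projV t) (↑Sv : Set _))).sum
        + (P.map (fun t => infDist (projZ t) (↑Sz : Set _))).sum := step1
    _ ≤ β * (P.map (fun t => infDist (projV t) (↑Cv : Set _))).sum
        + β * (P.map (fun t => infDist (projZ t) (↑Cz : Set _))).sum :=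
        add_le_add (hv Cv hCvcard) (hz Cz hCzcard)
    _ ≤ β * (P.map (fun t => infDist (projV t) (↑(C.image projV) : Set _))).sum
        + β * (P.map (fun t => infDist (projZ t) (↑(C.image projZ) : Set _))).sum :=
        add_le_add (mul_le_mul_of_nonneg_left stepv hβ0) (mul_le_mul_of_nonneg_left stepz hβ0)
    _ = β * ((P.map (fun t => infDist (projV t) (↑(C.image projV) : Set _))).sum
        + (P.map (fun t => infDist (projZ t) (↑(C.image projZ) : Set _))).sum) := by ring
    _ ≤ β * (Real.sqrt 2 * (P.map (fun t => infDist t (↑C : Set _))).sum) :=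
        mul_le_mul_of_nonneg_left step3 hβ0
    _ = Real.sqrt 2 * β * (P.map (fun t => infDist t (↑C : Set _))).sum := by ring
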